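/- Fix η ∈ ℝ, a real r×n matrix A⁰ with orthonormal rows, i.e. A⁰·(A⁰)ᵀ = I_r, a real m×r matrix B⁰, and real m×n matrices G(0), G(1), G(2), … . Define A(0) = A⁰, B(0) = B⁰, and the SGD recursions A(s+1) = A(s) − η·B(s)ᵀ·G(s) and B(s+1) = B(s) − η·G(s)·A(s)ᵀ. Define simultaneously f_A : ℕ → ℝ^{n×n} and f_B : ℕ → ℝ^{m×n} by f_A(0) = 0, f_B(0) = 0, f_A(s+1) = f_A(s) − η·f_B(s)ᵀ·G(s) − (A⁰)ᵀ·(B⁰)ᵀ·G(s), and f_B(s+1) = f_B(s) − G(s)·(η·f_A(s)ᵀ + I_n). Then for every s ∈ ℕ: A(s) = A⁰ + η·A⁰·f_A(s) and B(s) = B⁰ + η·f_B(s)·(A⁰)ᵀ. -/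
import Mathlib


open Matrix

/-- Closed-form LoRA SGD dynamics for task `i` under SLAO's initialization:
`A⁰` has orthonormal rows (`A⁰·(A⁰)ᵀ = I_r`) and `B⁰` is arbitrary; then
`A(s) = A⁰ + η·A⁰·f_A(s)` and `B(s) = B⁰ + η·f_B(s)·(A⁰)ᵀ`. -/
theorem slao_task_dynamics {m r n : ℕ} (η : ℝ)
    (A0 : Matrix (Fin r) (Fin n) ℝ)
    (hA0orth : A0 * A0ᵀ = 1)
    (B0 : Matrix (Fin m) (Fin r) ℝ)
    (G : ℕ → Matrix (Fin m) (Fin n) ℝ)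
    (A : ℕ → Matrix (Fin r) (Fin n) ℝ)
    (B : ℕ → Matrix (Fin m) (Fin r) ℝ)
    (fA : ℕ → Matrix (Fin n) (Fin n) ℝ)
    (fB : ℕ → Matrix (Fin m) (Fin n) ℝ)
    (hA0 : A 0 = A0) (hB0 : B 0 = B0)
    (hA : ∀ s, A (s + 1) = A s - η • ((B s)ᵀ * G s))
    (hB : ∀ s, B (s + 1) = B s - η • (G s * (A s)ᵀ))
    (hfA0 : fA 0 = 0) (hfB0 : fB 0 = 0)
    (hfA : ∀ s, fA (s + 1) = fA s - η • ((fB s)ᵀ * G s) - A0ᵀ * B0ᵀ * G s)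
    (hfB : ∀ s, fB (s + 1) = fB s - G s * (η • (fA s)ᵀ + 1)) :
    ∀ s : ℕ,
      A s = A0 + η • (A0 * fA s) ∧
      B s = B0 + η • (fB s * A0ᵀ) := by
  intro s
  induction s with
  | zero => simp [hA0, hB0, hfA0, hfB0]
  | succ s ih =>
    obtain ⟨ihA, ihB⟩ := ih
    constructor
    · rw [hA s, hfA s, ihA, ihB]
      simp only [transpose_add, transpose_smul, transpose_mul, Matrix.mul_sub,
        Matrix.sub_mul, Matrix.add_mul, Matrix.mul_add, smul_add, smul_sub,
        Matrix.smul_mul, Matrix.mul_smul, ← Matrix.mul_assoc, hA0orth,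
        Matrix.one_mul, Matrix.mul_one, transpose_transpose]
      module
    · rw [hB s, hfB s, ihA, ihB]
      simp only [transpose_add, transpose_smul, transpose_mul, Matrix.mul_sub,
        Matrix.sub_mul, Matrix.add_mul, Matrix.mul_add, smul_add, smul_sub,
        Matrix.smul_mul, Matrix.mul_smul, ← Matrix.mul_assoc, hA0orth,
        Matrix.one_mul, Matrix.mul_one, transpose_transpose, transpose_one]
      module
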